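/- arXiv:1411.4034 — 5 statements merged into one kernel-verified Lean document; each statement's English description precedes it below -/
import Mathlib

section
/- Let u be a continuous real-valued function on a closed ball B̄(x, ρ) ⊂ ℝ^d. Then there exists h ∈ ℝ^d with |h| ≤ ρ such that the Lebesgue-average of u over B(x,ρ) equals (u(x+h) + u(x−h))/2. -/
open Metric MeasureTheory

theorem stmt_8 (d : ℕ) (x : EuclideanSpace ℝ (Fin d)) (ρ : ℝ) (hρ : 0 < ρ)
    (u : EuclideanSpace ℝ (Fin d) → ℝ) (hu : ContinuousOn u (closedBall x ρ)) :
    ∃ h : EuclideanSpace ℝ (Fin d), ‖h‖ ≤ ρ ∧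
      (⨍ y in ball x ρ, u y) = (u (x + h) + u (x - h)) / 2 := by
  set c : EuclideanSpace ℝ (Fin d) := x + x with hc
  set f : EuclideanSpace ℝ (Fin d) → EuclideanSpace ℝ (Fin d) := fun y => c - y with hf
  -- f is the reflection about x; it maps balls around x to themselves
  have hrefl : ∀ y : EuclideanSpace ℝ (Fin d), dist (f y) x = dist y x := by
    intro y
    simp only [hf, hc, dist_eq_norm]
    have : x + x - y - x = -(y - x) := by abel
    rw [this, norm_neg]
  have hfball : f '' ball x ρ = ball x ρ := by
    ext z
    constructor
    · rintro ⟨y, hy, rfl⟩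
      simpa [mem_ball, hrefl] using hy
    · intro hz
      exact ⟨f z, by simpa [mem_ball, hrefl] using hz, by simp [hf]⟩
  have hfmapsc : Set.MapsTo f (closedBall x ρ) (closedBall x ρ) := by
    intro y hy
    simpa [mem_closedBall, hrefl] using hy
  have hfcont : Continuous f := by
    exact
      (continuous_const.sub continuous_id :
        Continuous fun y : EuclideanSpace ℝ (Fin d) => c - y)
  -- reflection preserves volume
  have hmp : MeasurePreserving f
      (volume : Measure (EuclideanSpace ℝ (Fin d))) volume :=
    Measure.measurePreserving_sub_left volume c
  have hemb : MeasurableEmbedding f := (MeasurableEquiv.subLeft c).measurableEmbedding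
  -- integrability
  have hucomp : ContinuousOn (fun y => u (f y)) (closedBall x ρ) :=
    hu.comp (hfcont.continuousOn) hfmapsc
  have hint_u : IntegrableOn u (ball x ρ) volume :=
    (hu.integrableOn_compact (isCompact_closedBall x ρ)).mono_set ball_subset_closedBall
  have hint_uf : IntegrableOn (fun y => u (f y)) (ball x ρ) volume :=
    (hucomp.integrableOn_compact (isCompact_closedBall x ρ)).mono_set ball_subset_closedBall
  -- reflection invariance of the integral
  have hinteq : (∫ y in ball x ρ, u y) = ∫ y in ball x ρ, u (f y) := by
    conv_lhs => rw [← hfball]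
    exact hmp.setIntegral_image_emb hemb u (ball x ρ)
  set g : EuclideanSpace ℝ (Fin d) → ℝ := fun y => (u y + u (f y)) / 2 with hg
  have hgcont : ContinuousOn g (closedBall x ρ) :=
    ((hu.add hucomp).div_const 2)
  have hint_g : IntegrableOn g (ball x ρ) volume := (hint_u.add hint_uf).div_const 2
  have hμ0 : (volume : Measure (EuclideanSpace ℝ (Fin d))) (ball x ρ) ≠ 0 :=
    (measure_ball_pos volume x hρ).ne'
  have hμt : (volume : Measure (EuclideanSpace ℝ (Fin d))) (ball x ρ) ≠ ⊤ :=
    measure_ball_lt_top.ne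
  -- average of g equals average of u
  have havg : (⨍ y in ball x ρ, u y) = ⨍ y in ball x ρ, g y := by
    simp only [setAverage_eq, hg, smul_eq_mul]
    congr 1
    rw [integral_div, integral_add hint_u hint_uf, ← hinteq]
    ring
  set A : ℝ := ⨍ y in ball x ρ, u y with hA
  -- there are points where g is below / above the average
  obtain ⟨a, ha, hga⟩ := exists_le_setAverage hμ0 hμt hint_g
  obtain ⟨b, hb, hgb⟩ := exists_setAverage_le hμ0 hμt hint_g
  rw [← havg] at hga hgb
  -- intermediate value theorem on the closed ball
  have hconn : IsPreconnected (closedBall x ρ) :=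
    (convex_closedBall x ρ).isPreconnected
  have hivt := hconn.intermediate_value (ball_subset_closedBall ha)
    (ball_subset_closedBall hb) hgcont
  have hAmem : A ∈ Set.Icc (g a) (g b) := ⟨hga, hgb⟩
  obtain ⟨y0, hy0, hgy0⟩ := hivt hAmem
  refine ⟨y0 - x, ?_, ?_⟩
  · have : ‖y0 - x‖ = dist y0 x := (dist_eq_norm y0 x).symm
    rw [this]
    exact mem_closedBall.mp hy0
  · have h1 : x + (y0 - x) = y0 := by abel
    have h2 : x - (y0 - x) = f y0 := by simp only [hf, hc]; abel
    rw [h1, h2, ← hgy0]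
end

section
/- Let Ω ⊂ ℝ^d be a bounded convex domain, u ∈ C(Ω̄), and let Γ_u denote the convex hull of the graph G_u = {(x, u(x)) : x ∈ Ω̄} ⊂ ℝ^{d+1}. Let r be an admissible radius function on Ω and define Su(x) = (sup_{B(x,r(x))} u + inf_{B(x,r(x))} u)/2 and Mu(x) = Lebesgue-average of u over B(x,r(x)) for x ∈ Ω, with Su = Mu = u on ∂Ω. Then for every x ∈ Ω̄, both (x, Su(x)) and (x, Mu(x)) belong to Γ_u. -/
open Metric MeasureTheory Set Module

section Aux

lemma myPadSum {M : Type*} [AddCommMonoid M] {m n : ℕ} (hmn : m ≤ n) (f : Fin m → M) :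
    ∑ i : Fin n, (if h : (i : ℕ) < m then f ⟨i, h⟩ else 0) = ∑ i : Fin m, f i := by
  set F : ℕ → M := fun i => if h : i < m then f ⟨i, h⟩ else 0 with hF
  have h1 : ∑ i : Fin n, (if h : (i : ℕ) < m then f ⟨i, h⟩ else 0) = ∑ i ∈ Finset.range n, F i :=
    Fin.sum_univ_eq_sum_range F n
  have h2 : ∑ i ∈ Finset.range n, F i = ∑ i ∈ Finset.range m, F i := by
    refine (Finset.sum_subset (Finset.range_subset_range.2 hmn) fun i _ hi => ?_).symm
    simp only [Finset.mem_range, not_lt] at hi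
    simp [hF, Nat.not_lt.2 hi]
  have h3 : ∑ i ∈ Finset.range m, F i = ∑ i : Fin m, f i := by
    rw [← Fin.sum_univ_eq_sum_range F m]
    exact Finset.sum_congr rfl fun i _ => by simp [hF, i.isLt]
  rw [h1, h2, h3]

lemma myIsCompact_convexHull {E : Type*} [NormedAddCommGroup E] [NormedSpace ℝ E]
    [FiniteDimensional ℝ E] {s : Set E} (hs : IsCompact s) :
    IsCompact (convexHull ℝ s) := by
  rcases s.eq_empty_or_nonempty with rfl | ⟨x₀, hx₀⟩
  · simp
  set n := finrank ℝ E + 1 with hn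
  have hK : IsCompact ((stdSimplex ℝ (Fin n)) ×ˢ (Set.pi Set.univ fun _ : Fin n => s)) :=
    IsCompact.prod (isCompact_stdSimplex _ _) (isCompact_univ_pi fun _ => hs)
  have hcont : Continuous fun q : (Fin n → ℝ) × (Fin n → E) => ∑ i, q.1 i • q.2 i := by
    refine continuous_finset_sum _ fun i _ => ?_
    exact ((continuous_apply i).comp continuous_fst).smul
      ((continuous_apply i).comp continuous_snd)
  have himg := hK.image hcont
  have heq : convexHull ℝ s =
      (fun q : (Fin n → ℝ) × (Fin n → E) => ∑ i, q.1 i • q.2 i) ''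
        ((stdSimplex ℝ (Fin n)) ×ˢ (Set.pi Set.univ fun _ : Fin n => s)) := by
    apply Set.Subset.antisymm
    · intro x hx
      rw [convexHull_eq_union] at hx
      simp only [Set.mem_iUnion] at hx
      obtain ⟨t, hts, hai, hxt⟩ := hx
      have hcard : t.card ≤ n := by
        have h1 := hai.card_le_finrank_succ
        have h2 : finrank ℝ (vectorSpan ℝ (Set.range ((↑) : t → E))) ≤ finrank ℝ E :=
          Submodule.finrank_le _
        rw [Fintype.card_coe] at h1
        omega
      rw [Finset.convexHull_eq] at hxt
      obtain ⟨w, hw0, hw1, hwx⟩ := hxt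
      rw [Finset.centerMass_eq_of_sum_1 _ _ hw1] at hwx
      set m := t.card with hm
      have e : Fin m ≃ {y // y ∈ t} := (Fintype.equivFinOfCardEq (Fintype.card_coe t)).symm
      set g : Fin m → E := fun i => ((e i : {y // y ∈ t}) : E) with hg
      have hgt : ∀ i, g i ∈ t := fun i => (e i).2
      have hgs : ∀ i, g i ∈ s := fun i => hts (hgt i)
      have hsum : ∑ i : Fin m, w (g i) • g i = x := by
        rw [← hwx, ← Finset.sum_attach t (fun y => w y • id y)]
        exact Fintype.sum_equiv e _ _ (fun i => rfl)
      have hsumw : ∑ i : Fin m, w (g i) = 1 := by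
        rw [← hw1, ← Finset.sum_attach t (fun y => w y)]
        exact Fintype.sum_equiv e _ _ (fun i => rfl)
      set W : Fin n → ℝ := fun i => if h : (i : ℕ) < m then w (g ⟨i, h⟩) else 0 with hW
      set P : Fin n → E := fun i => if h : (i : ℕ) < m then g ⟨i, h⟩ else x₀ with hP
      refine ⟨⟨W, P⟩, ⟨⟨fun i => ?_, ?_⟩, fun i _ => ?_⟩, ?_⟩
      · by_cases h : (i : ℕ) < m
        · simpa [hW, h] using hw0 _ (hgt ⟨i, h⟩)
        · simp [hW, h]
      · exact (myPadSum hcard (fun j : Fin m => w (g j))).trans hsumw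
      · by_cases h : (i : ℕ) < m
        · simpa [hP, h] using hgs ⟨i, h⟩
        · simpa [hP, h] using hx₀
      · have heq2 : ∑ i : Fin n, W i • P i
            = ∑ i : Fin n, (if h : (i : ℕ) < m then w (g ⟨i, h⟩) • g ⟨i, h⟩ else 0) := by
          refine Finset.sum_congr rfl fun i _ => ?_
          by_cases h : (i : ℕ) < m <;> simp [hW, hP, h]
        exact (heq2.trans (myPadSum hcard (fun j : Fin m => w (g j) • g j))).trans hsum
    · rintro _ ⟨⟨w, p⟩, ⟨hw, hp⟩, rfl⟩
      exact Convex.sum_mem (convex_convexHull ℝ s) (fun i _ => hw.1 i) hw.2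
        (fun i _ => subset_convexHull ℝ s (hp i (Set.mem_univ i)))
  rw [heq]; exact himg

lemma myIntegralIdBall {d : ℕ} (x : EuclideanSpace ℝ (Fin d)) (r : ℝ) :
    ∫ y in ball x r, y = (volume (ball x r)).toReal • x := by
  by_cases hr : 0 < r
  · set F : EuclideanSpace ℝ (Fin d) → EuclideanSpace ℝ (Fin d) :=
      (ball (0 : EuclideanSpace ℝ (Fin d)) r).indicator (fun w => w) with hFdef
    have hFodd : ∀ z, F (-z) = -F z := by
      intro z
      by_cases h : z ∈ ball (0 : EuclideanSpace ℝ (Fin d)) r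
      · rw [hFdef, Set.indicator_of_mem (by simpa using h), Set.indicator_of_mem h]
      · rw [hFdef, Set.indicator_of_notMem (by simpa using h), Set.indicator_of_notMem h,
          neg_zero]
    have hF0 : ∫ z, F z = 0 := by
      have hneg : ∫ z, F (-z) = ∫ z, F z := integral_neg_eq_self F volume
      have h2 : ∫ z, -F z = ∫ z, F z := by
        rw [← hneg]; exact integral_congr_ae (Filter.Eventually.of_forall fun z => (hFodd z).symm)
      rw [integral_neg] at h2
      have h3 : (2 : ℝ) • ∫ z, F z = 0 := by
        rw [two_smul]; nth_rewrite 1 [← h2]; exact neg_add_cancel _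
      have h4 := smul_eq_zero.1 h3
      simpa using h4
    have htrans : ∫ y in ball x r, (y - x) = 0 := by
      rw [← integral_indicator measurableSet_ball]
      have hcongr : ∀ y, (ball x r).indicator (fun w => w - x) y = F (y - x) := by
        intro y
        by_cases h : y ∈ ball x r
        · rw [Set.indicator_of_mem h, hFdef, Set.indicator_of_mem]
          simpa [mem_ball, dist_eq_norm] using h
        · rw [Set.indicator_of_notMem h, hFdef, Set.indicator_of_notMem]
          simpa [mem_ball, dist_eq_norm] using h
      rw [integral_congr_ae (Filter.Eventually.of_forall hcongr)]
      rw [integral_sub_right_eq_self F x]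
      exact hF0
    have hint1 : IntegrableOn (fun y : EuclideanSpace ℝ (Fin d) => y - x) (ball x r) := by
      refine (ContinuousOn.integrableOn_compact (isCompact_closedBall x r) ?_).mono_set
        ball_subset_closedBall
      exact (continuous_id.sub continuous_const).continuousOn
    have hint2 : IntegrableOn (fun _ : EuclideanSpace ℝ (Fin d) => x) (ball x r) :=
      integrableOn_const measure_ball_lt_top.ne
    have hsplit : ∫ y in ball x r, y
        = (∫ y in ball x r, (y - x)) + ∫ _y in ball x r, x := by
      rw [← integral_add hint1 hint2]
      exact integral_congr_ae (Filter.Eventually.of_forall fun y => (sub_add_cancel y x).symm)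
    rw [hsplit, htrans, setIntegral_const, zero_add, measureReal_def]
  · rw [ball_eq_empty.2 (not_lt.1 hr)]
    simp

end Aux

theorem stmt_9 (d : ℕ) (Ω : Set (EuclideanSpace ℝ (Fin d))) (hne : Ω.Nonempty)
    (hopen : IsOpen Ω) (hconv : Convex ℝ Ω) (hbd : Bornology.IsBounded Ω)
    (u : EuclideanSpace ℝ (Fin d) → ℝ) (hu : ContinuousOn u (closure Ω))
    (r : EuclideanSpace ℝ (Fin d) → ℝ)
    (hr : ∀ x ∈ Ω, 0 < r x ∧ r x ≤ infDist x (frontier Ω))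
    (S M : EuclideanSpace ℝ (Fin d) → ℝ)
    (hS : ∀ x ∈ Ω, S x = (sSup (u '' ball x (r x)) + sInf (u '' ball x (r x))) / 2)
    (hM : ∀ x ∈ Ω, M x = ⨍ y in ball x (r x), u y)
    (hSb : ∀ x ∈ frontier Ω, S x = u x) (hMb : ∀ x ∈ frontier Ω, M x = u x) :
    ∀ x ∈ closure Ω,
      (x, S x) ∈ convexHull ℝ {p : EuclideanSpace ℝ (Fin d) × ℝ | ∃ z ∈ closure Ω, p = (z, u z)} ∧
      (x, M x) ∈ convexHull ℝ {p : EuclideanSpace ℝ (Fin d) × ℝ | ∃ z ∈ closure Ω, p = (z, u z)} := by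
  set G : Set (EuclideanSpace ℝ (Fin d) × ℝ) :=
    {p : EuclideanSpace ℝ (Fin d) × ℝ | ∃ z ∈ closure Ω, p = (z, u z)} with hG
  intro x hx
  by_cases hxΩ : x ∈ Ω
  swap
  · have hxf : x ∈ frontier Ω := by
      rw [frontier, hopen.interior_eq]; exact ⟨hx, hxΩ⟩
    rw [hSb x hxf, hMb x hxf]
    exact ⟨subset_convexHull ℝ G ⟨x, hx, rfl⟩, subset_convexHull ℝ G ⟨x, hx, rfl⟩⟩
  obtain ⟨hr0, hrle⟩ := hr x hxΩ
  have hΩne_univ : Ω ≠ univ := by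
    intro h
    have hfr : frontier Ω = ∅ := by rw [h, frontier_univ]
    rw [hfr, infDist_empty] at hrle
    linarith
  have hfr : infDist x (frontier Ω) ≤ infDist x Ωᶜ := by
    obtain ⟨y, hy, hyd⟩ := exists_mem_frontier_infDist_compl_eq_dist hxΩ hΩne_univ
    rw [hyd]; exact infDist_le_dist_of_mem hy
  have hball : ball x (r x) ⊆ Ω :=
    Set.Subset.trans (ball_subset_ball (hrle.trans hfr)) ball_infDist_compl_subset
  have hcb : closedBall x (r x) ⊆ closure Ω :=
    Set.Subset.trans (closedBall_subset_closedBall (hrle.trans hfr))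
      (closedBall_infDist_compl_subset_closure hxΩ)
  have hxball : x ∈ ball x (r x) := mem_ball_self hr0
  have hcompact := isCompact_closedBall x (r x)
  have hu' : ContinuousOn u (closedBall x (r x)) := hu.mono hcb
  have hGcmp : IsCompact G := by
    have hGim : G = (fun z => (z, u z)) '' closure Ω := by
      ext p
      simp only [hG, Set.mem_setOf_eq, Set.mem_image]
      constructor
      · rintro ⟨z, hz, rfl⟩; exact ⟨z, hz, rfl⟩
      · rintro ⟨z, hz, rfl⟩; exact ⟨z, hz, rfl⟩
    rw [hGim]
    exact (hbd.isCompact_closure).image_of_continuousOn (ContinuousOn.prodMk continuousOn_id hu)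
  have hclosed : IsClosed (convexHull ℝ G) := (myIsCompact_convexHull hGcmp).isClosed
  have hGsub : ∀ z ∈ closedBall x (r x), ((z, u z) : EuclideanSpace ℝ (Fin d) × ℝ) ∈ convexHull ℝ G :=
    fun z hz => subset_convexHull ℝ G ⟨z, hcb hz, rfl⟩
  constructor
  · -- S part
    obtain ⟨y, hy, hymax⟩ := hcompact.exists_isMaxOn ⟨x, mem_closedBall_self hr0.le⟩ hu'
    obtain ⟨z, hz, hzmin⟩ := hcompact.exists_isMinOn ⟨x, mem_closedBall_self hr0.le⟩ hu'
    have hUcmp : IsCompact (u '' closedBall x (r x)) := hcompact.image_of_continuousOn hu'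
    have hbddA : BddAbove (u '' ball x (r x)) :=
      hUcmp.bddAbove.mono (Set.image_mono (f := u) ball_subset_closedBall)
    have hbddB : BddBelow (u '' ball x (r x)) :=
      hUcmp.bddBelow.mono (Set.image_mono (f := u) ball_subset_closedBall)
    have hneim : (u '' ball x (r x)).Nonempty := ⟨u x, ⟨x, hxball, rfl⟩⟩
    have hclb : closure (ball x (r x)) = closedBall x (r x) := closure_ball x hr0.ne'
    have himgcl : u '' closedBall x (r x) ⊆ closure (u '' ball x (r x)) := by
      have := (hclb ▸ hu' : ContinuousOn u (closure (ball x (r x)))).image_closure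
      rwa [hclb] at this
    have hsup : sSup (u '' ball x (r x)) = u y := by
      apply le_antisymm
      · refine csSup_le hneim ?_
        rintro a ⟨w, hw, rfl⟩
        exact hymax (ball_subset_closedBall hw)
      · have h1 : u y ∈ closure (u '' ball x (r x)) := himgcl ⟨y, hy, rfl⟩
        have h2 : closure (u '' ball x (r x)) ⊆ Iic (sSup (u '' ball x (r x))) :=
          closure_minimal (fun a ha => le_csSup hbddA ha) isClosed_Iic
        exact h2 h1
    have hinf : sInf (u '' ball x (r x)) = u z := by
      apply le_antisymm
      · have h1 : u z ∈ closure (u '' ball x (r x)) := himgcl ⟨z, hz, rfl⟩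
        have h2 : closure (u '' ball x (r x)) ⊆ Ici (sInf (u '' ball x (r x))) :=
          closure_minimal (fun a ha => csInf_le hbddB ha) isClosed_Ici
        exact h2 h1
      · refine le_csInf hneim ?_
        rintro a ⟨w, hw, rfl⟩
        exact hzmin (ball_subset_closedBall hw)
    have hrefl : ∀ w ∈ closedBall x (r x), x + (x - w) ∈ closedBall x (r x) := by
      intro w hw
      rw [mem_closedBall, dist_eq_norm, show x + (x - w) - x = -(w - x) by abel, norm_neg,
        ← dist_eq_norm]
      exact hw
    have key : ∀ w ∈ closedBall x (r x), ∀ w' ∈ closedBall x (r x), w + w' = x + x →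
        ((x, (u w + u w') / 2) : EuclideanSpace ℝ (Fin d) × ℝ) ∈ convexHull ℝ G := by
      intro w hw w' hw' hww
      have h1 := hGsub w hw
      have h2 := hGsub w' hw'
      have hmem := (convex_convexHull ℝ G) h1 h2 (le_of_lt one_half_pos) (le_of_lt one_half_pos)
        (by norm_num)
      have heq : (1 / 2 : ℝ) • ((w, u w) : EuclideanSpace ℝ (Fin d) × ℝ) + (1 / 2 : ℝ) • ((w', u w') : EuclideanSpace ℝ (Fin d) × ℝ)
          = ((x, (u w + u w') / 2) : EuclideanSpace ℝ (Fin d) × ℝ) := by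
        rw [Prod.smul_mk, Prod.smul_mk, Prod.mk_add_mk]
        refine Prod.ext ?_ ?_
        · show (1 / 2 : ℝ) • w + (1 / 2 : ℝ) • w' = x
          rw [← smul_add, hww, smul_add, ← add_smul]
          norm_num
        · show (1 / 2 : ℝ) * u w + (1 / 2 : ℝ) * u w' = (u w + u w') / 2
          ring
      rwa [heq] at hmem
    have hy' := hrefl y hy
    have hz' := hrefl z hz
    have t1mem := key y hy (x + (x - y)) hy' (by abel)
    have t2mem := key z hz (x + (x - z)) hz' (by abel)
    set t1 := (u y + u (x + (x - y))) / 2 with ht1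
    set t2 := (u z + u (x + (x - z))) / 2 with ht2
    have hb1 : u z ≤ u (x + (x - y)) := hzmin hy'
    have hb2 : u (x + (x - z)) ≤ u y := hymax hz'
    have hSx : S x = (u y + u z) / 2 := by rw [hS x hxΩ, hsup, hinf]
    have hle1 : S x ≤ t1 := by rw [hSx, ht1]; linarith
    have hle2 : t2 ≤ S x := by rw [hSx, ht2]; linarith
    obtain ⟨a, b, ha, hb, hab, hcomb⟩ : S x ∈ segment ℝ t2 t1 := by
      rw [segment_eq_Icc (hle2.trans hle1)]
      exact ⟨hle2, hle1⟩
    have hmem := (convex_convexHull ℝ G) t2mem t1mem ha hb hab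
    have heq : a • ((x, t2) : EuclideanSpace ℝ (Fin d) × ℝ) + b • ((x, t1) : EuclideanSpace ℝ (Fin d) × ℝ) = ((x, S x) : EuclideanSpace ℝ (Fin d) × ℝ) := by
      rw [Prod.smul_mk, Prod.smul_mk, Prod.mk_add_mk]
      refine Prod.ext ?_ ?_
      · exact Convex.combo_self hab x
      · exact hcomb
    rwa [heq] at hmem
  · -- M part
    have hμ0 : volume (ball x (r x)) ≠ 0 := (measure_ball_pos volume x hr0).ne'
    have hμtop : volume (ball x (r x)) ≠ ⊤ := measure_ball_lt_top.ne
    have htR : (volume (ball x (r x))).toReal ≠ 0 :=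
      (ENNReal.toReal_pos hμ0 hμtop).ne'
    have hint : IntegrableOn (fun y : EuclideanSpace ℝ (Fin d) => ((y, u y) : EuclideanSpace ℝ (Fin d) × ℝ)) (ball x (r x)) :=
      (ContinuousOn.integrableOn_compact hcompact (ContinuousOn.prodMk continuousOn_id hu')).mono_set
        ball_subset_closedBall
    have havg : (⨍ y in ball x (r x), ((y, u y) : EuclideanSpace ℝ (Fin d) × ℝ)) ∈ convexHull ℝ G := by
      refine (convex_convexHull ℝ G).set_average_mem hclosed hμ0 hμtop ?_ hint
      refine (ae_restrict_iff' measurableSet_ball).2 (Filter.Eventually.of_forall fun w hw => ?_)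
      exact subset_convexHull ℝ G ⟨w, subset_closure (hball hw), rfl⟩
    have h1 := ((ContinuousLinearMap.fst ℝ (EuclideanSpace ℝ (Fin d)) ℝ).integral_comp_comm
      hint).symm
    have h2 := ((ContinuousLinearMap.snd ℝ (EuclideanSpace ℝ (Fin d)) ℝ).integral_comp_comm
      hint).symm
    simp only [ContinuousLinearMap.coe_fst', ContinuousLinearMap.coe_snd'] at h1 h2
    have heq : (⨍ y in ball x (r x), ((y, u y) : EuclideanSpace ℝ (Fin d) × ℝ)) = ((x, M x) : EuclideanSpace ℝ (Fin d) × ℝ) := by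
      rw [setAverage_eq]
      refine Prod.ext ?_ ?_
      · show (volume (ball x (r x))).toReal⁻¹ • (∫ y in ball x (r x), ((y, u y) : EuclideanSpace ℝ (Fin d) × ℝ)).1 = x
        rw [h1, myIntegralIdBall x (r x), smul_smul, inv_mul_cancel₀ htR, one_smul]
      · show (volume (ball x (r x))).toReal⁻¹ • (∫ y in ball x (r x), ((y, u y) : EuclideanSpace ℝ (Fin d) × ℝ)).2 = M x
        rw [h2, hM x hxΩ, setAverage_eq, measureReal_def]
    rwa [heq] at havg
end

section
/- Comparison principle: Let μ be a positive Borel measure on ℝ^d with μ(B) > 0 for every ball B, Ω ⊂ ℝ^d a bounded domain, r an admissible radius function on Ω, and 0 ≤ α < 1. Define for u ∈ C(Ω̄): T_α u(x) = α·(sup_{B(x,r(x))} u + inf_{B(x,r(x))} u)/2 + (1−α)·(μ-average of u over B(x,r(x))) for x ∈ Ω. If u, v ∈ C(Ω̄) satisfy T_α u = u and T_α v = v in Ω, and u ≤ v on ∂Ω, then u ≤ v throughout Ω. -/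
open Metric MeasureTheory

/-- If a nonnegative continuous function on a ball is positive somewhere, and the measure is
positive and finite on balls, its integral over the ball is positive. -/
lemma aux_int_pos_12 {d : ℕ} (μ : Measure (EuclideanSpace ℝ (Fin d)))
    (hpos : ∀ (x : EuclideanSpace ℝ (Fin d)) (ρ : ℝ), 0 < ρ → 0 < μ (ball x ρ))
    (hfin : ∀ (x : EuclideanSpace ℝ (Fin d)) (ρ : ℝ), μ (ball x ρ) < ⊤)
    (a : EuclideanSpace ℝ (Fin d)) (ρ : ℝ) (f : EuclideanSpace ℝ (Fin d) → ℝ)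
    (hf : ContinuousOn f (ball a ρ)) (h0 : ∀ z ∈ ball a ρ, 0 ≤ f z)
    (hint : IntegrableOn f (ball a ρ) μ)
    (y : EuclideanSpace ℝ (Fin d)) (hy : y ∈ ball a ρ) (hfy : 0 < f y) :
    0 < ∫ z in ball a ρ, f z ∂μ := by
  have hc : ContinuousAt f y := hf.continuousAt (isOpen_ball.mem_nhds hy)
  have h1 : ∀ᶠ z in nhds y, f y / 2 < f z :=
    hc.eventually_const_lt (by linarith)
  have h2 : {z | f y / 2 < f z} ∩ ball a ρ ∈ nhds y :=
    Filter.inter_mem h1 (isOpen_ball.mem_nhds hy)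
  obtain ⟨δ, hδ, hball⟩ := Metric.mem_nhds_iff.mp h2
  have hsub : ball y δ ⊆ ball a ρ := fun z hz => (hball hz).2
  have hlt : ∀ z ∈ ball y δ, f y / 2 ≤ f z := fun z hz => (hball hz).1.le
  have hμs : 0 < (μ (ball y δ)).toReal :=
    ENNReal.toReal_pos (hpos y δ hδ).ne' (hfin y δ).ne
  have step1 : 0 < f y / 2 * (μ (ball y δ)).toReal := mul_pos (by linarith) hμs
  have step2 : f y / 2 * (μ (ball y δ)).toReal ≤ ∫ z in ball y δ, f z ∂μ :=
    setIntegral_ge_of_const_le_real measurableSet_ball (hfin y δ).ne hlt (hint.mono_set hsub)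
  have step3 : ∫ z in ball y δ, f z ∂μ ≤ ∫ z in ball a ρ, f z ∂μ := by
    apply setIntegral_mono_set hint
    · exact (ae_restrict_iff' measurableSet_ball).mpr (Filter.Eventually.of_forall h0)
    · exact Filter.Eventually.of_forall hsub
  linarith

set_option maxHeartbeats 2000000 in
theorem stmt_12 (d : ℕ) (μ : Measure (EuclideanSpace ℝ (Fin d)))
    (hpos : ∀ (x : EuclideanSpace ℝ (Fin d)) (ρ : ℝ), 0 < ρ → 0 < μ (ball x ρ))
    (hfin : ∀ (x : EuclideanSpace ℝ (Fin d)) (ρ : ℝ), μ (ball x ρ) < ⊤)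
    (Ω : Set (EuclideanSpace ℝ (Fin d))) (hne : Ω.Nonempty)
    (hopen : IsOpen Ω) (hconn : IsConnected Ω) (hbd : Bornology.IsBounded Ω)
    (r : EuclideanSpace ℝ (Fin d) → ℝ)
    (hr : ∀ x ∈ Ω, 0 < r x ∧ r x ≤ infDist x Ωᶜ)
    (α : ℝ) (hα0 : 0 ≤ α) (hα1 : α < 1)
    (u v : EuclideanSpace ℝ (Fin d) → ℝ)
    (hu : ContinuousOn u (closure Ω)) (hv : ContinuousOn v (closure Ω))
    (hTu : ∀ x ∈ Ω, u x =
      α * ((sSup (u '' ball x (r x)) + sInf (u '' ball x (r x))) / 2) +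
        (1 - α) * ⨍ y in ball x (r x), u y ∂μ)
    (hTv : ∀ x ∈ Ω, v x =
      α * ((sSup (v '' ball x (r x)) + sInf (v '' ball x (r x))) / 2) +
        (1 - α) * ⨍ y in ball x (r x), v y ∂μ)
    (hbdry : ∀ x ∈ frontier Ω, u x ≤ v x) :
    ∀ x ∈ Ω, u x ≤ v x := by
  classical
  set w : EuclideanSpace ℝ (Fin d) → ℝ := fun x => u x - v x with hwdef
  have hwc : ContinuousOn w (closure Ω) := hu.sub hv
  have hclne : (closure Ω).Nonempty := hne.closure
  have hcpt : IsCompact (closure Ω) := hbd.isCompact_closure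
  obtain ⟨z, hzcl, hzmax⟩ := hcpt.exists_isMaxOn hclne hwc
  set m : ℝ := w z with hmdef
  have hwle : ∀ x ∈ closure Ω, w x ≤ m := fun x hx => hzmax hx
  clear_value w m
  by_cases hm : m ≤ 0
  · intro x hx
    have := hwle x (subset_closure hx)
    simp only [hwdef] at this
    linarith
  push_neg at hm
  exfalso
  -- balls are inside Ω
  have hballsub : ∀ a ∈ Ω, ball a (r a) ⊆ Ω := by
    intro a ha y hy
    by_contra hyc
    have hyc' : y ∈ Ωᶜ := hyc
    have h1 : infDist a Ωᶜ ≤ dist a y := infDist_le_dist_of_mem hyc'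
    have h2 := (hr a ha).2
    have h3 : dist y a < r a := mem_ball.mp hy
    have h4 : dist a y = dist y a := dist_comm a y
    linarith
  -- boundedness of images
  have hbU : BddAbove (u '' closure Ω) := (hcpt.image_of_continuousOn hu).bddAbove
  have hbU' : BddBelow (u '' closure Ω) := (hcpt.image_of_continuousOn hu).bddBelow
  have hbV : BddAbove (v '' closure Ω) := (hcpt.image_of_continuousOn hv).bddAbove
  have hbV' : BddBelow (v '' closure Ω) := (hcpt.image_of_continuousOn hv).bddBelow
  -- key step: if the max is attained at a ∈ Ω, then w = m on ball a (r a)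
  have key : ∀ a ∈ Ω, w a = m → ∀ y ∈ ball a (r a), w y = m := by
    intro a ha hwa
    set ρ := r a with hρdef
    have hρ : 0 < ρ := (hr a ha).1
    set B : Set (EuclideanSpace ℝ (Fin d)) := ball a ρ with hBdef
    have hBΩ : B ⊆ Ω := hballsub a ha
    have hBcl : B ⊆ closure Ω := hBΩ.trans subset_closure
    have hBne : B.Nonempty := ⟨a, mem_ball_self hρ⟩
    have hBmeas : MeasurableSet B := hBdef ▸ measurableSet_ball
    have hμBfin : μ B < ⊤ := hBdef ▸ hfin a ρ
    have hμBpos : 0 < μ B := hBdef ▸ hpos a ρ hρ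
    have hauxB : ∀ f : EuclideanSpace ℝ (Fin d) → ℝ, ContinuousOn f B →
        (∀ z ∈ B, 0 ≤ f z) → IntegrableOn f B μ →
        ∀ y ∈ B, 0 < f y → 0 < ∫ z in B, f z ∂μ := by
      rw [hBdef]
      exact fun f hf h0 hint y hy hfy => aux_int_pos_12 μ hpos hfin a ρ f hf h0 hint y hy hfy
    have hTua := hTu a ha
    have hTva := hTv a ha
    rw [← hρdef, ← hBdef] at hTua hTva
    clear_value ρ B
    have hwB : ∀ y ∈ B, w y ≤ m := fun y hy => hwle y (hBcl hy)
    -- sup/inf estimates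
    have hbUB : BddAbove (u '' B) := hbU.mono (Set.image_mono (f := u) hBcl)
    have hbUB' : BddBelow (u '' B) := hbU'.mono (Set.image_mono (f := u) hBcl)
    have hbVB : BddAbove (v '' B) := hbV.mono (Set.image_mono (f := v) hBcl)
    have hbVB' : BddBelow (v '' B) := hbV'.mono (Set.image_mono (f := v) hBcl)
    have hSup : sSup (u '' B) ≤ sSup (v '' B) + m := by
      apply csSup_le (hBne.image u)
      rintro _ ⟨y, hy, rfl⟩
      have h1 : u y - v y ≤ m := by simpa [hwdef] using hwB y hy
      have h2 : v y ≤ sSup (v '' B) := le_csSup hbVB (Set.mem_image_of_mem v hy)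
      linarith
    have hInf : sInf (u '' B) ≤ sInf (v '' B) + m := by
      rw [← sub_le_iff_le_add]
      apply le_csInf (hBne.image v)
      rintro _ ⟨y, hy, rfl⟩
      have h1 : u y - v y ≤ m := by simpa [hwdef] using hwB y hy
      have h2 : sInf (u '' B) ≤ u y := csInf_le hbUB' (Set.mem_image_of_mem u hy)
      linarith
    -- integrability
    have hintU : IntegrableOn u B μ := by
      obtain ⟨C, hC⟩ := hbU
      obtain ⟨C', hC'⟩ := hbU'
      apply Integrable.mono' (g := fun _ => max |C| |C'|)
        (integrableOn_const (C := max |C| |C'|) hμBfin.ne)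
        ((hu.mono hBcl).aestronglyMeasurable hBmeas)
      apply (ae_restrict_iff' hBmeas).mpr
      apply Filter.Eventually.of_forall
      intro y hy
      have h1 : u y ≤ C := hC (Set.mem_image_of_mem u (hBcl hy))
      have h2 : C' ≤ u y := hC' (Set.mem_image_of_mem u (hBcl hy))
      rw [Real.norm_eq_abs, abs_le]
      constructor
      · have := neg_abs_le C'; have := le_max_right |C| |C'|; linarith
      · have := le_abs_self C; have := le_max_left |C| |C'|; linarith
    have hintV : IntegrableOn v B μ := by
      obtain ⟨C, hC⟩ := hbV
      obtain ⟨C', hC'⟩ := hbV'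
      apply Integrable.mono' (g := fun _ => max |C| |C'|)
        (integrableOn_const (C := max |C| |C'|) hμBfin.ne)
        ((hv.mono hBcl).aestronglyMeasurable hBmeas)
      apply (ae_restrict_iff' hBmeas).mpr
      apply Filter.Eventually.of_forall
      intro y hy
      have h1 : v y ≤ C := hC (Set.mem_image_of_mem v (hBcl hy))
      have h2 : C' ≤ v y := hC' (Set.mem_image_of_mem v (hBcl hy))
      rw [Real.norm_eq_abs, abs_le]
      constructor
      · have := neg_abs_le C'; have := le_max_right |C| |C'|; linarith
      · have := le_abs_self C; have := le_max_left |C| |C'|; linarith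
    set c : ℝ := (μ B).toReal with hcdef
    have hc : 0 < c := ENNReal.toReal_pos hμBpos.ne' hμBfin.ne
    clear_value c
    have havgU : ⨍ y in B, u y ∂μ = c⁻¹ * ∫ y in B, u y ∂μ := by
      rw [setAverage_eq]; simp [hcdef, smul_eq_mul, measureReal_def]
    have havgV : ⨍ y in B, v y ∂μ = c⁻¹ * ∫ y in B, v y ∂μ := by
      rw [setAverage_eq]; simp [hcdef, smul_eq_mul, measureReal_def]
    -- main inequality
    have heq : w a = α * ((sSup (u '' B) + sInf (u '' B)) / 2
        - (sSup (v '' B) + sInf (v '' B)) / 2)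
        + (1 - α) * (c⁻¹ * ∫ y in B, u y ∂μ - c⁻¹ * ∫ y in B, v y ∂μ) := by
      have h1 := hTua
      have h2 := hTva
      rw [havgU] at h1
      rw [havgV] at h2
      simp only [hwdef]
      rw [h1, h2]
      ring
    have hmain : m ≤ α * m + (1 - α) * (c⁻¹ * (∫ y in B, u y ∂μ - ∫ y in B, v y ∂μ)) := by
      have h3 : (sSup (u '' B) + sInf (u '' B)) / 2
          - (sSup (v '' B) + sInf (v '' B)) / 2 ≤ m := by linarith
      have h4 : α * ((sSup (u '' B) + sInf (u '' B)) / 2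
          - (sSup (v '' B) + sInf (v '' B)) / 2) ≤ α * m :=
        mul_le_mul_of_nonneg_left h3 hα0
      have h5 : w a = α * ((sSup (u '' B) + sInf (u '' B)) / 2
          - (sSup (v '' B) + sInf (v '' B)) / 2)
          + (1 - α) * (c⁻¹ * (∫ y in B, u y ∂μ - ∫ y in B, v y ∂μ)) := by
        rw [heq]; ring
      linarith
    have hintgeq : m * c ≤ ∫ y in B, u y ∂μ - ∫ y in B, v y ∂μ := by
      have h1 : (1 - α) * m ≤ (1 - α) * (c⁻¹ * (∫ y in B, u y ∂μ - ∫ y in B, v y ∂μ)) := by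
        linarith
      have h2 : m ≤ c⁻¹ * (∫ y in B, u y ∂μ - ∫ y in B, v y ∂μ) :=
        le_of_mul_le_mul_left (by linarith [h1]) (by linarith : (0:ℝ) < 1 - α)
      calc m * c ≤ c⁻¹ * (∫ y in B, u y ∂μ - ∫ y in B, v y ∂μ) * c :=
            mul_le_mul_of_nonneg_right h2 hc.le
        _ = ∫ y in B, u y ∂μ - ∫ y in B, v y ∂μ := by field_simp
    have hintW : IntegrableOn w B μ := by rw [hwdef]; exact hintU.sub hintV
    have hintsub : ∫ y in B, w y ∂μ = (∫ y in B, u y ∂μ) - ∫ y in B, v y ∂μ := by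
      simp only [hwdef]
      exact integral_sub hintU hintV
    -- ∫ (m - w) ≤ 0
    have hintconst : ∫ _ in B, m ∂μ = m * c := by
      rw [setIntegral_const, smul_eq_mul, mul_comm, hcdef, measureReal_def]
    have hintMW : ∫ y in B, (m - w y) ∂μ ≤ 0 := by
      have h1 : ∫ y in B, (m - w y) ∂μ = (∫ _ in B, m ∂μ) - ∫ y in B, w y ∂μ :=
        integral_sub (integrableOn_const (C := m) hμBfin.ne) hintW
      rw [h1, hintconst, hintsub]
      linarith
    -- conclusion: w = m on B
    intro y hy
    by_contra hne'
    have hylt : w y < m := lt_of_le_of_ne (hwB y hy) hne'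
    have hposint : 0 < ∫ z in B, (m - w z) ∂μ := by
      apply hauxB (fun z => m - w z)
      · exact (continuousOn_const.sub (hwc.mono hBcl))
      · intro z hz; linarith [hwB z hz]
      · exact (integrableOn_const (C := m) hμBfin.ne).sub hintW
      · exact hy
      · linarith
    linarith
  -- z ∈ Ω
  have hfrontier_eq : frontier Ω = closure Ω \ Ω := by
    rw [frontier, hopen.interior_eq]
  have hzΩ : z ∈ Ω := by
    by_contra hzn
    have : z ∈ frontier Ω := hfrontier_eq ▸ ⟨hzcl, hzn⟩
    have := hbdry z this
    simp only [hmdef, hwdef] at hm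
    linarith
  -- connectedness: w = m everywhere on Ω
  have hallm : ∀ x ∈ Ω, w x = m := by
    set U : Set (EuclideanSpace ℝ (Fin d)) :=
      ⋃ a ∈ {x ∈ Ω | w x = m}, ball a (r a) with hUdef
    have hUopen : IsOpen U := isOpen_biUnion fun a _ => isOpen_ball
    have hUsubm : ∀ x ∈ U, w x = m := by
      intro x hx
      simp only [hUdef, Set.mem_iUnion] at hx
      obtain ⟨a, ⟨ha, hwa⟩, hxball⟩ := hx
      exact key a ha hwa x hxball
    set V : Set (EuclideanSpace ℝ (Fin d)) := Ω ∩ w ⁻¹' (Set.Iio m) with hVdef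
    have hVopen : IsOpen V :=
      (hwc.mono subset_closure).isOpen_inter_preimage hopen isOpen_Iio
    have hcover : Ω ⊆ U ∪ V := by
      intro x hx
      rcases eq_or_lt_of_le (hwle x (subset_closure hx)) with h | h
      · left
        simp only [hUdef, Set.mem_iUnion]
        exact ⟨x, ⟨hx, h⟩, mem_ball_self (hr x hx).1⟩
      · right; exact ⟨hx, h⟩
    have hUne : (Ω ∩ U).Nonempty := by
      refine ⟨z, hzΩ, ?_⟩
      simp only [hUdef, Set.mem_iUnion]
      exact ⟨z, ⟨hzΩ, hmdef.symm⟩, mem_ball_self (hr z hzΩ).1⟩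
    intro x hx
    by_contra hxm
    have hVne : (Ω ∩ V).Nonempty :=
      ⟨x, hx, hx, lt_of_le_of_ne (hwle x (subset_closure hx)) hxm⟩
    obtain ⟨p, _, hpU, hpV⟩ := hconn.isPreconnected U V hUopen hVopen hcover hUne hVne
    have h1 : w p = m := hUsubm p hpU
    have h2 : w p < m := hpV.2
    linarith
  -- Ωᶜ is nonempty
  have hcne : Ωᶜ.Nonempty := by
    by_contra hc
    rw [Set.not_nonempty_iff_eq_empty] at hc
    obtain ⟨x0, hx0⟩ := hne
    have h1 := (hr x0 hx0).1
    have h2 := (hr x0 hx0).2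
    rw [hc, infDist_empty] at h2
    linarith
  -- frontier Ω is nonempty
  have hfr : (frontier Ω).Nonempty := by
    by_contra hf
    rw [Set.not_nonempty_iff_eq_empty] at hf
    have hclosed : IsClosed Ω := by
      have : closure Ω ⊆ Ω := by
        intro x hx
        by_contra hxn
        exact Set.eq_empty_iff_forall_notMem.mp hf x (hfrontier_eq ▸ ⟨hx, hxn⟩)
      exact isClosed_of_closure_subset this
    have hclopen : IsClopen Ω := ⟨hclosed, hopen⟩
    rcases isClopen_iff.mp hclopen with h | h
    · exact hne.ne_empty h
    · obtain ⟨p, hp⟩ := hcne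
      rw [h] at hp
      exact hp (Set.mem_univ p)
  obtain ⟨p, hp⟩ := hfr
  have hpcl : p ∈ closure Ω := frontier_subset_closure hp
  have hpne : (nhdsWithin p Ω).NeBot := by
    rw [← mem_closure_iff_nhdsWithin_neBot]
    rw [hfrontier_eq] at hp
    exact hp.1
  have ht1 : Filter.Tendsto w (nhdsWithin p Ω) (nhds (w p)) :=
    (hwc p hpcl).mono_left (nhdsWithin_mono p subset_closure)
  have ht2 : Filter.Tendsto w (nhdsWithin p Ω) (nhds m) := by
    apply Filter.Tendsto.congr' _ tendsto_const_nhds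
    filter_upwards [self_mem_nhdsWithin] with x hx
    exact (hallm x hx).symm
  have hwp : w p = m := tendsto_nhds_unique ht1 ht2
  have := hbdry p hp
  simp only [hwdef] at hwp
  linarith
end

section
/- Uniqueness of the Dirichlet problem: under the hypotheses of the comparison principle (μ positive on balls, Ω bounded domain, r admissible radius function, 0 ≤ α < 1), if u, v ∈ C(Ω̄) both satisfy T_α w = w in Ω and u = v on ∂Ω, then u = v on Ω̄. -/
open Metric MeasureTheory

section Aux
open Set
set_option maxHeartbeats 1000000

theorem aux13 (d : ℕ) (μ : Measure (EuclideanSpace ℝ (Fin d)))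
    (hpos : ∀ (x : EuclideanSpace ℝ (Fin d)) (ρ : ℝ), 0 < ρ → 0 < μ (ball x ρ))
    (hfin : ∀ (x : EuclideanSpace ℝ (Fin d)) (ρ : ℝ), μ (ball x ρ) < ⊤)
    (Ω : Set (EuclideanSpace ℝ (Fin d))) (hne : Ω.Nonempty)
    (hopen : IsOpen Ω) (hconn : IsConnected Ω) (hbd : Bornology.IsBounded Ω)
    (r : EuclideanSpace ℝ (Fin d) → ℝ)
    (hr : ∀ x ∈ Ω, 0 < r x ∧ r x ≤ infDist x Ωᶜ)
    (α : ℝ) (hα0 : 0 ≤ α) (hα1 : α < 1)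
    (u v : EuclideanSpace ℝ (Fin d) → ℝ)
    (hu : ContinuousOn u (closure Ω)) (hv : ContinuousOn v (closure Ω))
    (hTu : ∀ x ∈ Ω, u x =
      α * ((sSup (u '' ball x (r x)) + sInf (u '' ball x (r x))) / 2) +
        (1 - α) * ⨍ y in ball x (r x), u y ∂μ)
    (hTv : ∀ x ∈ Ω, v x =
      α * ((sSup (v '' ball x (r x)) + sInf (v '' ball x (r x))) / 2) +
        (1 - α) * ⨍ y in ball x (r x), v y ∂μ)
    (hbdry : ∀ x ∈ frontier Ω, u x = v x) :
    ∀ x ∈ closure Ω, u x ≤ v x := by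
  set K := closure Ω with hK
  have hKc : IsCompact K := Metric.isCompact_of_isClosed_isBounded isClosed_closure hbd.closure
  have hKne : K.Nonempty := hne.mono subset_closure
  set w : EuclideanSpace ℝ (Fin d) → ℝ := fun y => u y - v y with hw
  have hwc : ContinuousOn w K := hu.sub hv
  obtain ⟨x₀, hx₀K, hx₀max⟩ := hKc.exists_isMaxOn hKne hwc
  set M := w x₀ with hM
  have hle : ∀ y ∈ K, w y ≤ M := fun y hy => hx₀max hy
  clear_value M
  clear_value w
  -- if M ≤ 0 we are done
  rcases le_or_gt M 0 with hM0 | hM0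
  · intro x hx
    have := hle x hx
    simp only [hw] at this
    linarith
  exfalso
  -- boundedness of u, v on K
  obtain ⟨Cu, hCu⟩ := hKc.exists_bound_of_continuousOn hu
  obtain ⟨Cv, hCv⟩ := hKc.exists_bound_of_continuousOn hv
  -- key: if x ∈ Ω attains the max, w = M on ball x (r x)
  have key : ∀ x ∈ Ω, w x = M → ∀ y ∈ ball x (r x), w y = M := by
    intro x hxΩ hxM
    obtain ⟨hr0, hrle⟩ := hr x hxΩ
    set B := ball x (r x) with hB
    have hBΩ : B ⊆ Ω := by
      intro y hy
      by_contra hyc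
      have : infDist x Ωᶜ ≤ dist x y := infDist_le_dist_of_mem hyc
      rw [dist_comm] at this
      have := mem_ball.mp hy
      linarith
    have hBK : B ⊆ K := hBΩ.trans subset_closure
    have hBne : B.Nonempty := ⟨x, mem_ball_self hr0⟩
    have huBne : (u '' B).Nonempty := hBne.image u
    have hvBne : (v '' B).Nonempty := hBne.image v
    have hbddu : BddAbove (u '' B) := ⟨Cu, by rintro a ⟨y, hy, rfl⟩; exact (abs_le.mp
      ((Real.norm_eq_abs _ ▸ hCu y (hBK hy)))).2⟩
    have hbddu' : BddBelow (u '' B) := ⟨-Cu, by rintro a ⟨y, hy, rfl⟩; exact (abs_le.mp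
      ((Real.norm_eq_abs _ ▸ hCu y (hBK hy)))).1⟩
    have hbddv : BddAbove (v '' B) := ⟨Cv, by rintro a ⟨y, hy, rfl⟩; exact (abs_le.mp
      ((Real.norm_eq_abs _ ▸ hCv y (hBK hy)))).2⟩
    have hbddv' : BddBelow (v '' B) := ⟨-Cv, by rintro a ⟨y, hy, rfl⟩; exact (abs_le.mp
      ((Real.norm_eq_abs _ ▸ hCv y (hBK hy)))).1⟩
    -- sup/inf comparison
    have hwM : ∀ y ∈ B, u y ≤ v y + M := by
      intro y hy; have := hle y (hBK hy); simp only [hw] at this; linarith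
    have hS : sSup (u '' B) ≤ sSup (v '' B) + M := by
      apply csSup_le huBne
      rintro a ⟨y, hy, rfl⟩
      exact le_trans (hwM y hy) (add_le_add_left (le_csSup hbddv ⟨y, hy, rfl⟩) M)
    have hI : sInf (u '' B) ≤ sInf (v '' B) + M := by
      rw [← sub_le_iff_le_add]
      apply le_csInf hvBne
      rintro a ⟨y, hy, rfl⟩
      have h1 : sInf (u '' B) ≤ u y := csInf_le hbddu' ⟨y, hy, rfl⟩
      have := hwM y hy
      linarith
    -- integrability
    haveI : IsFiniteMeasure (μ.restrict B) :=
      ⟨by rw [Measure.restrict_apply_univ]; exact hfin x (r x)⟩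
    have hmB : MeasurableSet B := measurableSet_ball
    have hintu : IntegrableOn u B μ := by
      refine ⟨((hu.mono hBK).aestronglyMeasurable hmB), ?_⟩
      exact HasFiniteIntegral.of_bounded (C := Cu)
        ((ae_restrict_iff' hmB).mpr (ae_of_all _ fun y hy => hCu y (hBK hy)))
    have hintv : IntegrableOn v B μ := by
      refine ⟨((hv.mono hBK).aestronglyMeasurable hmB), ?_⟩
      exact HasFiniteIntegral.of_bounded (C := Cv)
        ((ae_restrict_iff' hmB).mpr (ae_of_all _ fun y hy => hCv y (hBK hy)))
    have hintw : IntegrableOn w B μ := by rw [hw]; exact (hintu.sub hintv).congr (ae_of_all _ fun y => rfl)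
    have hμB0 : (μ B).toReal ≠ 0 := by
      have := hpos x (r x) hr0
      exact (ENNReal.toReal_pos this.ne' (hfin x (r x)).ne).ne'
    have hμBpos : 0 < (μ B).toReal := ENNReal.toReal_pos (hpos x (r x) hr0).ne' (hfin x (r x)).ne
    -- average comparison
    have havg : ∫ y in B, w y ∂μ ≥ M * (μ B).toReal := by
      have hu' := hTu x hxΩ
      have hv' := hTv x hxΩ
      have hwx : w x = α * (((sSup (u '' B) + sInf (u '' B)) / 2) - ((sSup (v '' B) + sInf (v '' B)) / 2))
          + (1 - α) * ((⨍ y in B, u y ∂μ) - ⨍ y in B, v y ∂μ) := by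
        simp only [hw]; rw [hu', hv']; ring
      have havgsub : (⨍ y in B, u y ∂μ) - (⨍ y in B, v y ∂μ)
          = (μ B).toReal⁻¹ * ∫ y in B, w y ∂μ := by
        simp only [hw]
        rw [setAverage_eq, setAverage_eq, smul_eq_mul, smul_eq_mul, ← mul_sub,
          ← integral_sub hintu hintv]
        rfl
      have hsupterm : ((sSup (u '' B) + sInf (u '' B)) / 2) - ((sSup (v '' B) + sInf (v '' B)) / 2) ≤ M := by
        linarith
      have h1 : M ≤ α * M + (1 - α) * ((μ B).toReal⁻¹ * ∫ y in B, w y ∂μ) := by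
        have e : M = α * (((sSup (u '' B) + sInf (u '' B)) / 2) - ((sSup (v '' B) + sInf (v '' B)) / 2))
            + (1 - α) * ((μ B).toReal⁻¹ * ∫ y in B, w y ∂μ) := by
          rw [← hxM, hwx, havgsub]
        have hm : α * (((sSup (u '' B) + sInf (u '' B)) / 2) - ((sSup (v '' B) + sInf (v '' B)) / 2)) ≤ α * M :=
          mul_le_mul_of_nonneg_left hsupterm hα0
        linarith [e, hm]
      have h2 : M ≤ (μ B).toReal⁻¹ * ∫ y in B, w y ∂μ := by
        nlinarith [h1, sub_pos.mpr hα1]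
      calc M * (μ B).toReal ≤ ((μ B).toReal⁻¹ * ∫ y in B, w y ∂μ) * (μ B).toReal :=
            mul_le_mul_of_nonneg_right h2 hμBpos.le
        _ = ∫ y in B, w y ∂μ := by field_simp
    -- the nonnegative function M - w has zero integral on B
    set g : EuclideanSpace ℝ (Fin d) → ℝ := fun y => M - w y with hg
    have hgnon : ∀ y ∈ B, 0 ≤ g y := fun y hy => sub_nonneg.mpr (hle y (hBK hy))
    have hintg : Integrable g (μ.restrict B) := (integrable_const M).sub hintw
    have hig : ∫ y in B, g y ∂μ = 0 := by
      have h1 : ∫ y in B, g y ∂μ = M * (μ B).toReal - ∫ y in B, w y ∂μ := by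
        rw [hg]
        rw [integral_sub (integrable_const M) hintw]
        simp [Measure.restrict_apply_univ, mul_comm]
        exact Or.inl rfl
      have h2 : 0 ≤ ∫ y in B, g y ∂μ :=
        setIntegral_nonneg hmB hgnon
      linarith
    have hae : g =ᵐ[μ.restrict B] 0 := by
      rw [← integral_eq_zero_iff_of_nonneg_ae _ hintg]
      · exact hig
      · exact (ae_restrict_iff' hmB).mpr (ae_of_all _ hgnon)
    -- conclude g = 0 everywhere on B by continuity
    intro y hy
    by_contra hne'
    have hgy : 0 < g y := lt_of_le_of_ne (hgnon y hy) (fun h => hne' (by simp [hg] at h ⊢; linarith))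
    have hgc : ContinuousAt g y := by
      have : ContinuousOn g B := (continuousOn_const.sub (hwc.mono hBK))
      exact this.continuousAt (hB ▸ isOpen_ball.mem_nhds hy)
    have hev : ∀ᶠ z in nhds y, 0 < g z := continuousAt_const.eventually_lt hgc hgy
    have hev2 : ∀ᶠ z in nhds y, z ∈ B := isOpen_ball.mem_nhds hy
    obtain ⟨δ, hδ0, hδ⟩ := Metric.eventually_nhds_iff_ball.mp (hev.and hev2)
    have hsub : ball y δ ⊆ {z | g z ≠ 0} := fun z hz => (hδ z hz).1.ne'
    have hzero : (μ.restrict B) {z | g z ≠ 0} = 0 := by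
      have := hae
      rw [Filter.EventuallyEq, Filter.eventually_iff, mem_ae_iff] at this
      simp at this; exact this
    have h1 : (μ.restrict B) (ball y δ) = μ (ball y δ) := by
      rw [Measure.restrict_apply measurableSet_ball, inter_eq_self_of_subset_left
        (fun z hz => (hδ z hz).2)]
    have h2 : (μ.restrict B) (ball y δ) ≤ 0 := hzero ▸ measure_mono hsub
    have := hpos y δ hδ0
    rw [h1] at h2
    exact absurd (le_antisymm h2 zero_le) this.ne'
  -- the max is attained in Ω
  have hx₀Ω : x₀ ∈ Ω := by
    rcases (closure_eq_self_union_frontier Ω ▸ hx₀K : x₀ ∈ Ω ∪ frontier Ω) with h | h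
    · exact h
    · exact absurd (hM ▸ (by simp [hw, hbdry x₀ h] : w x₀ = 0)) hM0.ne'
  -- clopen argument
  set E := {x | x ∈ Ω ∧ w x = M} with hE
  set F := {x | x ∈ Ω ∧ w x ≠ M} with hF
  have hEopen : IsOpen E := by
    rw [isOpen_iff_mem_nhds]
    intro x ⟨hxΩ, hxM⟩
    obtain ⟨hr0, _⟩ := hr x hxΩ
    have hBΩ : ball x (r x) ⊆ Ω := by
      intro y hy
      by_contra hyc
      have h1 : infDist x Ωᶜ ≤ dist x y := infDist_le_dist_of_mem hyc
      rw [dist_comm] at h1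
      have := mem_ball.mp hy
      have := (hr x hxΩ).2
      linarith
    have := key x hxΩ hxM
    exact Filter.mem_of_superset (ball_mem_nhds x hr0)
      (fun y hy => ⟨hBΩ hy, this y hy⟩)
  have hFopen : IsOpen F := by
    have hwΩ : ContinuousOn w Ω := hwc.mono subset_closure
    have : F = Ω ∩ w ⁻¹' {M}ᶜ := by
      ext z
      simp only [hF, Set.mem_setOf_eq, Set.mem_inter_iff, Set.mem_compl_iff,
        Set.mem_preimage, Set.mem_singleton_iff]
    rw [this]
    exact hwΩ.isOpen_inter_preimage hopen (isOpen_compl_iff.mpr isClosed_singleton)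
  have hΩE : Ω ⊆ E := by
    apply hconn.isPreconnected.subset_left_of_subset_union hEopen hFopen
    · rw [Set.disjoint_left]
      rintro z ⟨_, hz⟩ ⟨_, hz'⟩
      exact hz' hz
    · intro z hz
      by_cases h : w z = M
      · exact Or.inl ⟨hz, h⟩
      · exact Or.inr ⟨hz, h⟩
    · exact ⟨x₀, hx₀Ω, hx₀Ω, hM.symm⟩
  -- w = M on closure Ω
  have hWM : ∀ z ∈ K, w z = M := by
    intro z hz
    have hnb : (nhdsWithin z Ω).NeBot := mem_closure_iff_nhdsWithin_neBot.mp hz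
    have h1 : Filter.Tendsto w (nhdsWithin z Ω) (nhds (w z)) :=
      (hwc z hz).mono subset_closure
    have h2 : Filter.Tendsto w (nhdsWithin z Ω) (nhds M) := by
      apply Filter.Tendsto.congr' _ tendsto_const_nhds
      exact Filter.eventuallyEq_of_mem self_mem_nhdsWithin (fun y hy => ((hΩE hy).2).symm)
    exact tendsto_nhds_unique h1 h2
  -- frontier is nonempty
  have hcompl : Ωᶜ.Nonempty := by
    by_contra h
    rw [Set.not_nonempty_iff_eq_empty] at h
    obtain ⟨x, hx⟩ := hne
    obtain ⟨h1, h2⟩ := hr x hx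
    rw [h, infDist_empty] at h2
    linarith
  have hfront : (frontier Ω).Nonempty := by
    by_contra h
    rw [Set.not_nonempty_iff_eq_empty, ← isClopen_iff_frontier_eq_empty] at h
    rcases isClopen_iff.mp h with h | h
    · exact absurd h (Set.nonempty_iff_ne_empty.mp hne)
    · obtain ⟨z, hz⟩ := hcompl
      exact hz (h ▸ Set.mem_univ z)
  obtain ⟨z, hz⟩ := hfront
  have h1 : w z = M := hWM z (frontier_subset_closure hz)
  have h2 : w z = 0 := by simp [hw, hbdry z hz]
  rw [h2] at h1
  exact hM0.ne h1

end Aux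

theorem stmt_13 (d : ℕ) (μ : Measure (EuclideanSpace ℝ (Fin d)))
    (hpos : ∀ (x : EuclideanSpace ℝ (Fin d)) (ρ : ℝ), 0 < ρ → 0 < μ (ball x ρ))
    (hfin : ∀ (x : EuclideanSpace ℝ (Fin d)) (ρ : ℝ), μ (ball x ρ) < ⊤)
    (Ω : Set (EuclideanSpace ℝ (Fin d))) (hne : Ω.Nonempty)
    (hopen : IsOpen Ω) (hconn : IsConnected Ω) (hbd : Bornology.IsBounded Ω)
    (r : EuclideanSpace ℝ (Fin d) → ℝ)
    (hr : ∀ x ∈ Ω, 0 < r x ∧ r x ≤ infDist x Ωᶜ)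
    (α : ℝ) (hα0 : 0 ≤ α) (hα1 : α < 1)
    (u v : EuclideanSpace ℝ (Fin d) → ℝ)
    (hu : ContinuousOn u (closure Ω)) (hv : ContinuousOn v (closure Ω))
    (hTu : ∀ x ∈ Ω, u x =
      α * ((sSup (u '' ball x (r x)) + sInf (u '' ball x (r x))) / 2) +
        (1 - α) * ⨍ y in ball x (r x), u y ∂μ)
    (hTv : ∀ x ∈ Ω, v x =
      α * ((sSup (v '' ball x (r x)) + sInf (v '' ball x (r x))) / 2) +
        (1 - α) * ⨍ y in ball x (r x), v y ∂μ)
    (hbdry : ∀ x ∈ frontier Ω, u x = v x) :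
    ∀ x ∈ closure Ω, u x = v x := by
  intro x hx
  exact le_antisymm
    (aux13 d μ hpos hfin Ω hne hopen hconn hbd r hr α hα0 hα1 u v hu hv hTu hTv hbdry x hx)
    (aux13 d μ hpos hfin Ω hne hopen hconn hbd r hr α hα0 hα1 v u hv hu hTv hTu
      (fun z hz => (hbdry z hz).symm) x hx)
end

section
/- Let Ω ⊂ ℝ^d be a bounded strictly convex domain, u ∈ C(Ω̄), and suppose a sequence of functions u_k ∈ C(Ω̄) satisfies: the graph of each u_k lies in Γ_u, the convex hull of the graph of u, and u_k = u on ∂Ω. Then the family {u_k} is equicontinuous at every boundary point ξ ∈ ∂Ω: for every ε > 0 there is δ > 0 such that |u_k(x) − u(ξ)| < ε whenever x ∈ Ω̄, |x − ξ| < δ, for all k. -/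
open Metric

lemma aux_convex_diff {d : ℕ} (Ω : Set (EuclideanSpace ℝ (Fin d)))
    (hopen : IsOpen Ω) (hconv : Convex ℝ Ω)
    (hstrict : ∀ x ∈ frontier Ω, ∀ y ∈ frontier Ω, x ≠ y →
      ∀ t : ℝ, t ∈ Set.Ioo (0 : ℝ) 1 → t • x + (1 - t) • y ∈ Ω)
    {ξ : EuclideanSpace ℝ (Fin d)} (hξ : ξ ∈ frontier Ω) :
    Convex ℝ (closure Ω \ {ξ}) := by
  have hint : interior Ω = Ω := hopen.interior_eq
  have hξΩ : ξ ∉ Ω := by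
    have := hξ.2; rw [hint] at this; exact this
  intro a ha b hb ta tb hta htb hab
  refine ⟨hconv.closure ha.1 hb.1 hta htb hab, ?_⟩
  simp only [Set.mem_singleton_iff]
  intro hEq
  rcases eq_or_lt_of_le hta with h0 | hta'
  · -- ta = 0, so tb = 1, ξ = b
    have : tb = 1 := by linarith
    rw [← h0, this] at hEq
    simp at hEq
    exact hb.2 (Set.mem_singleton_iff.mpr hEq)
  rcases eq_or_lt_of_le htb with h0 | htb'
  · have : ta = 1 := by linarith
    rw [← h0, this] at hEq
    simp at hEq
    exact ha.2 (Set.mem_singleton_iff.mpr hEq)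
  -- both positive
  by_cases haΩ : a ∈ Ω
  · have : ξ ∈ interior Ω := by
      apply hconv.openSegment_interior_closure_subset_interior (x := a) (y := b)
      · rwa [hint]
      · exact hb.1
      · exact ⟨ta, tb, hta', htb', hab, hEq⟩
    rw [hint] at this; exact hξΩ this
  by_cases hbΩ : b ∈ Ω
  · have : ξ ∈ interior Ω := by
      apply hconv.openSegment_interior_closure_subset_interior (x := b) (y := a)
      · rwa [hint]
      · exact ha.1
      · exact ⟨tb, ta, htb', hta', by linarith, by rw [← hEq]; abel⟩
    rw [hint] at this; exact hξΩ this
  -- both on frontier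
  have haf : a ∈ frontier Ω := ⟨ha.1, by rwa [hint]⟩
  have hbf : b ∈ frontier Ω := ⟨hb.1, by rwa [hint]⟩
  have hne : a ≠ b := by
    rintro rfl
    apply ha.2
    have : ta • a + tb • a = a := by rw [← add_smul, hab, one_smul]
    rw [this] at hEq; exact Set.mem_singleton_iff.mpr hEq
  have : ta • a + (1 - ta) • b ∈ Ω := hstrict a haf b hbf hne ta ⟨hta', by linarith⟩
  rw [show (1 : ℝ) - ta = tb by linarith, hEq] at this
  exact hξΩ this

lemma aux_key {d : ℕ} (Ω : Set (EuclideanSpace ℝ (Fin d)))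
    (hopen : IsOpen Ω) (hconv : Convex ℝ Ω)
    (hstrict : ∀ x ∈ frontier Ω, ∀ y ∈ frontier Ω, x ≠ y →
      ∀ t : ℝ, t ∈ Set.Ioo (0 : ℝ) 1 → t • x + (1 - t) • y ∈ Ω)
    (u : EuclideanSpace ℝ (Fin d) → ℝ)
    {ξ : EuclideanSpace ℝ (Fin d)} (hξ : ξ ∈ frontier Ω) {t : ℝ}
    (ht : (ξ, t) ∈ convexHull ℝ
      {p : EuclideanSpace ℝ (Fin d) × ℝ | ∃ z ∈ closure Ω, p = (z, u z)}) :
    t = u ξ := by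
  obtain ⟨ι, hfin, z, w, hrange, hai, hpos, hsum, heq⟩ :=
    eq_pos_convex_span_of_mem_convexHull ht
  have hz : ∀ i, (z i).1 ∈ closure Ω ∧ (z i).2 = u (z i).1 := by
    intro i
    obtain ⟨q, hq, hq2⟩ := hrange (Set.mem_range_self i)
    rw [hq2]; exact ⟨hq, rfl⟩
  have h1 : ∑ i, w i • (z i).1 = ξ := by
    have := congrArg Prod.fst heq
    simpa [Prod.fst_sum] using this
  have h2 : ∑ i, w i * (z i).2 = t := by
    have := congrArg Prod.snd heq
    simpa [Prod.snd_sum, smul_eq_mul] using this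
  have hall : ∀ i, (z i).1 = ξ := by
    by_contra hcon
    push_neg at hcon
    obtain ⟨i₀, hi₀⟩ := hcon
    classical
    set s₁ : Finset ι := Finset.univ.filter (fun i => (z i).1 ≠ ξ) with hs₁
    have hi₀s : i₀ ∈ s₁ := Finset.mem_filter.mpr ⟨Finset.mem_univ _, hi₀⟩
    have hW : (0 : ℝ) < ∑ i ∈ s₁, w i :=
      Finset.sum_pos (fun i _ => hpos i) ⟨i₀, hi₀s⟩
    set c := s₁.centerMass w (fun i => (z i).1) with hc
    have hcmem : c ∈ closure Ω \ {ξ} := by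
      apply (aux_convex_diff Ω hopen hconv hstrict hξ).centerMass_mem
        (fun i _ => (hpos i).le) hW
      intro i hi
      exact ⟨(hz i).1, (Finset.mem_filter.mp hi).2⟩
    have hWc : (∑ i ∈ s₁, w i) • c = ∑ i ∈ s₁, w i • (z i).1 := by
      rw [hc, Finset.centerMass, smul_inv_smul₀ hW.ne']
    have hsplit : ∑ i, w i • (z i).1 =
        (∑ i ∈ s₁, w i • (z i).1)
          + ∑ i ∈ Finset.univ.filter (fun i => ¬ (z i).1 ≠ ξ), w i • (z i).1 :=
      (Finset.sum_filter_add_sum_filter_not _ _ _).symm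
    have hsum0 : ∑ i ∈ Finset.univ.filter (fun i => ¬ (z i).1 ≠ ξ), w i • (z i).1
        = (∑ i ∈ Finset.univ.filter (fun i => ¬ (z i).1 ≠ ξ), w i) • ξ := by
      rw [Finset.sum_smul]
      apply Finset.sum_congr rfl
      intro i hi
      have := (Finset.mem_filter.mp hi).2
      push_neg at this
      rw [this]
    have hwsplit : (∑ i ∈ s₁, w i)
        + ∑ i ∈ Finset.univ.filter (fun i => ¬ (z i).1 ≠ ξ), w i = 1 := by
      rw [hs₁, Finset.sum_filter_add_sum_filter_not, hsum]
    set W := ∑ i ∈ s₁, w i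
    have hW0 : ∑ i ∈ Finset.univ.filter (fun i => ¬ (z i).1 ≠ ξ), w i = 1 - W := by
      linarith
    have hfix : W • c + (1 - W) • ξ = ξ := by
      rw [hWc, ← hW0, ← hsum0, ← hsplit, h1]
    have hWξ : W • ξ = W • c := by
      rw [eq_sub_of_add_eq hfix]
      module
    have : ξ = c := smul_right_injective _ hW.ne' hWξ
    exact hcmem.2 (by rw [← this]; rfl)
  rw [← h2]
  have : ∀ i, w i * (z i).2 = w i * u ξ := by
    intro i
    rw [(hz i).2, hall i]
  rw [Finset.sum_congr rfl (fun i _ => this i), ← Finset.sum_mul, hsum, one_mul]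

theorem stmt_19 (d : ℕ) (Ω : Set (EuclideanSpace ℝ (Fin d))) (hne : Ω.Nonempty)
    (hopen : IsOpen Ω) (hconv : Convex ℝ Ω) (hbd : Bornology.IsBounded Ω)
    (hstrict : ∀ x ∈ frontier Ω, ∀ y ∈ frontier Ω, x ≠ y →
      ∀ t : ℝ, t ∈ Set.Ioo (0 : ℝ) 1 → t • x + (1 - t) • y ∈ Ω)
    (u : EuclideanSpace ℝ (Fin d) → ℝ) (hu : ContinuousOn u (closure Ω))
    (uk : ℕ → EuclideanSpace ℝ (Fin d) → ℝ)
    (huk : ∀ k, ContinuousOn (uk k) (closure Ω))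
    (hgraph : ∀ k, ∀ x ∈ closure Ω,
      (x, uk k x) ∈ convexHull ℝ
        {p : EuclideanSpace ℝ (Fin d) × ℝ | ∃ z ∈ closure Ω, p = (z, u z)})
    (hbdry : ∀ k, ∀ x ∈ frontier Ω, uk k x = u x) :
    ∀ ξ ∈ frontier Ω, ∀ ε : ℝ, 0 < ε → ∃ δ : ℝ, 0 < δ ∧
      ∀ k, ∀ x ∈ closure Ω, dist x ξ < δ → |uk k x - u ξ| < ε := by
  classical
  set A : Set (EuclideanSpace ℝ (Fin d) × ℝ) :=
    {p | ∃ z ∈ closure Ω, p = (z, u z)} with hA_def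
  -- A is compact
  have hK : IsCompact (closure Ω) := hbd.isCompact_closure
  have hAim : A = (fun x => (x, u x)) '' closure Ω := by
    ext p
    simp only [hA_def, Set.mem_setOf_eq, Set.mem_image]
    constructor
    · rintro ⟨z, hz, rfl⟩; exact ⟨z, hz, rfl⟩
    · rintro ⟨z, hz, rfl⟩; exact ⟨z, hz, rfl⟩
  have hA : IsCompact A := by
    rw [hAim]
    exact hK.image_of_continuousOn (continuousOn_id.prodMk hu)
  -- the convex hull is compact
  have hΓ : IsCompact (convexHull ℝ A) := by
    set n := d + 2 with hn
    set D : Set ((Fin n → ℝ) × (Fin n → EuclideanSpace ℝ (Fin d) × ℝ)) :=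
      (stdSimplex ℝ (Fin n)) ×ˢ (Set.univ.pi fun _ => A) with hD_def
    have hD : IsCompact D :=
      (isCompact_stdSimplex ℝ _).prod (isCompact_univ_pi fun _ => hA)
    set F : (Fin n → ℝ) × (Fin n → EuclideanSpace ℝ (Fin d) × ℝ) →
        EuclideanSpace ℝ (Fin d) × ℝ := fun wz => ∑ i, wz.1 i • wz.2 i with hF_def
    have hF : Continuous F := by
      apply continuous_finset_sum
      intro i _
      exact ((continuous_apply i).comp continuous_fst).smul
        ((continuous_apply i).comp continuous_snd)
    have himg : convexHull ℝ A = F '' D := by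
      apply Set.Subset.antisymm
      · intro p hp
        obtain ⟨ι, hfin, z, w, hrange, hai, hpos, hsum, heq⟩ :=
          eq_pos_convex_span_of_mem_convexHull hp
        have hcard : Fintype.card ι ≤ n := by
          have h1 := hai.card_le_finrank_succ
          have h2 : Module.finrank ℝ (vectorSpan ℝ (Set.range z)) ≤
              Module.finrank ℝ (EuclideanSpace ℝ (Fin d) × ℝ) :=
            Submodule.finrank_le _
          have h3 : Module.finrank ℝ (EuclideanSpace ℝ (Fin d) × ℝ) = d + 1 := by
            rw [Module.finrank_prod, finrank_euclideanSpace_fin, Module.finrank_self]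
          omega
        obtain ⟨e⟩ : Nonempty (ι ↪ Fin n) := by
          apply Function.Embedding.nonempty_of_card_le
          simpa using hcard
        obtain ⟨x₀, hx₀⟩ := hne
        have ha₀ : (x₀, u x₀) ∈ A := ⟨x₀, subset_closure hx₀, rfl⟩
        set w' : Fin n → ℝ := Function.extend e w 0 with hw'
        set z' : Fin n → EuclideanSpace ℝ (Fin d) × ℝ :=
          Function.extend e z (fun _ => (x₀, u x₀)) with hz'
        have hw'0 : ∀ j, j ∉ Finset.univ.image e → w' j = 0 := by
          intro j hj
          apply Function.extend_apply'
          rintro ⟨i, rfl⟩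
          exact hj (Finset.mem_image_of_mem e (Finset.mem_univ i))
        have hw'nn : ∀ j, 0 ≤ w' j := by
          intro j
          by_cases hj : ∃ i, e i = j
          · obtain ⟨i, rfl⟩ := hj
            rw [hw', e.injective.extend_apply]
            exact (hpos i).le
          · rw [hw', Function.extend_apply' _ _ _ hj]; rfl
        have hz'A : ∀ j, z' j ∈ A := by
          intro j
          by_cases hj : ∃ i, e i = j
          · obtain ⟨i, rfl⟩ := hj
            rw [hz', e.injective.extend_apply]
            exact hrange (Set.mem_range_self i)
          · rw [hz', Function.extend_apply' _ _ _ hj]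
            exact ha₀
        have hsum' : ∑ j, w' j = 1 := by
          rw [← Finset.sum_subset (Finset.subset_univ (Finset.univ.image e))
            (fun j _ hj => hw'0 j hj)]
          rw [Finset.sum_image (fun a _ b _ h => e.injective h)]
          rw [← hsum]
          exact Finset.sum_congr rfl fun i _ => by rw [hw', e.injective.extend_apply]
        have heq' : F (w', z') = p := by
          show ∑ j, w' j • z' j = p
          rw [← Finset.sum_subset (Finset.subset_univ (Finset.univ.image e))
            (fun j _ hj => by rw [hw'0 j hj, zero_smul])]
          rw [Finset.sum_image (fun a _ b _ h => e.injective h)]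
          rw [← heq]
          exact Finset.sum_congr rfl fun i _ => by
            rw [hw', hz', e.injective.extend_apply, e.injective.extend_apply]
        exact ⟨(w', z'), ⟨⟨hw'nn, hsum'⟩, fun i _ => hz'A i⟩, heq'⟩
      · rintro _ ⟨⟨w, zf⟩, ⟨hw, hzf⟩, rfl⟩
        apply (convex_convexHull ℝ A).sum_mem (fun i _ => hw.1 i) hw.2
        intro i _
        exact subset_convexHull ℝ A (hzf i (Set.mem_univ i))
    rw [himg]
    exact hD.image hF
  -- main argument
  intro ξ hξ ε hε
  by_contra hcon
  push_neg at hcon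
  have H : ∀ m : ℕ, ∃ k, ∃ x ∈ closure Ω, dist x ξ < 1 / (m + 1) ∧
      ε ≤ |uk k x - u ξ| := by
    intro m
    obtain ⟨k, x, hx, hd, hge⟩ := hcon (1 / (m + 1)) (by positivity)
    exact ⟨k, x, hx, hd, hge⟩
  choose k x hx hdist hge using H
  have hp : ∀ m, (x m, uk (k m) (x m)) ∈ convexHull ℝ A :=
    fun m => hgraph (k m) (x m) (hx m)
  obtain ⟨q, hq, φ, hφ, hlim⟩ := hΓ.tendsto_subseq hp
  have hxξ : Filter.Tendsto x Filter.atTop (nhds ξ) := by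
    rw [tendsto_iff_dist_tendsto_zero]
    apply squeeze_zero (fun m => dist_nonneg) (fun m => (hdist m).le)
    exact tendsto_one_div_add_atTop_nhds_zero_nat
  have hx1 : Filter.Tendsto (fun m => x (φ m)) Filter.atTop (nhds q.1) :=
    (continuous_fst.tendsto q).comp hlim
  have hx2 : Filter.Tendsto (fun m => x (φ m)) Filter.atTop (nhds ξ) :=
    hxξ.comp hφ.tendsto_atTop
  have hq1 : q.1 = ξ := tendsto_nhds_unique hx1 hx2
  have hq2 : q.2 = u ξ := by
    apply aux_key Ω hopen hconv hstrict u hξ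
    rw [← hq1]
    simpa using hq
  have hy : Filter.Tendsto (fun m => uk (k (φ m)) (x (φ m))) Filter.atTop (nhds q.2) :=
    (continuous_snd.tendsto q).comp hlim
  have habs : Filter.Tendsto (fun m => |uk (k (φ m)) (x (φ m)) - u ξ|)
      Filter.atTop (nhds |q.2 - u ξ|) :=
    ((hy.sub tendsto_const_nhds).abs)
  have : ε ≤ |q.2 - u ξ| :=
    le_of_tendsto_of_tendsto tendsto_const_nhds habs
      (Filter.Eventually.of_forall fun m => hge (φ m))
  rw [hq2, sub_self, abs_zero] at this
  linarith
end
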